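/- Let F : ℝ³ × ℝ³ → ℝ³ be locally Lipschitz with F(p, w)·w = 0 for all p, w ∈ ℝ³ and F(p, 0) = 0 for all p ∈ ℝ³. Let x : [0,∞) → ℝ³ be twice differentiable and satisfy ẍ(t) = F(x(t), ẋ(t)) − ∇U(x(t)) − kv·ẋ(t) for all t ≥ 0. Then the equilibrium (xg, 0) is attractive: x(t) → xg and ẋ(t) → 0 as t → ∞. -/

import Mathlib

open scoped RealInnerProductSpace
open Classical Filter

/-- The gradient of the Huber potential `U` centred at the goal `xg`. -/
noncomputable def gradHuberU (kp kv dxmax : ℝ) (xg p : EuclideanSpace ℝ (Fin 3)) :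
    EuclideanSpace ℝ (Fin 3) :=
  if ‖p - xg‖ < kv * dxmax / kp then kp • (p - xg)
  else (kv * dxmax / ‖p - xg‖) • (p - xg)

/-- The Huber potential itself. -/
noncomputable def HuberU (kp kv dxmax : ℝ) (xg p : EuclideanSpace ℝ (Fin 3)) : ℝ :=
  if ‖p - xg‖ < kv * dxmax / kp then kp / 2 * ‖p - xg‖ ^ 2
  else kv * dxmax * ‖p - xg‖ - kv ^ 2 * dxmax ^ 2 / (2 * kp)

section helpers

variable {kp kv dxmax : ℝ} {xg : EuclideanSpace ℝ (Fin 3)}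

lemma hasFDerivAt_quad (p : EuclideanSpace ℝ (Fin 3)) :
    HasFDerivAt (fun q : EuclideanSpace ℝ (Fin 3) => kp / 2 * ‖q - xg‖ ^ 2)
      (innerSL ℝ (kp • (p - xg))) p := by
  have h1 : HasFDerivAt (fun q : EuclideanSpace ℝ (Fin 3) => ‖q - xg‖ ^ 2)
      ((2 • innerSL ℝ (p - xg)).comp (ContinuousLinearMap.id ℝ _)) p := by
    have h := (hasStrictFDerivAt_norm_sq (p - xg)).hasFDerivAt.comp p
      ((hasFDerivAt_id p).sub_const xg)
    exact h
  have h2 := h1.const_mul (kp / 2)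
  refine h2.congr_fderiv ?_
  ext h
  simp [real_inner_smul_left, two_smul]
  ring

lemma hasFDerivAt_norm_sub (p : EuclideanSpace ℝ (Fin 3)) (hp : p ≠ xg) :
    HasFDerivAt (fun q : EuclideanSpace ℝ (Fin 3) => ‖q - xg‖)
      (innerSL ℝ ((‖p - xg‖)⁻¹ • (p - xg))) p := by
  have hne : ‖p - xg‖ ≠ 0 := by simpa [sub_eq_zero] using hp
  have h1 : HasFDerivAt (fun q : EuclideanSpace ℝ (Fin 3) => ‖q - xg‖ ^ 2)
      ((2 • innerSL ℝ (p - xg)).comp (ContinuousLinearMap.id ℝ _)) p := by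
    have h := (hasStrictFDerivAt_norm_sq (p - xg)).hasFDerivAt.comp p
      ((hasFDerivAt_id p).sub_const xg)
    exact h
  have hx : (fun q : EuclideanSpace ℝ (Fin 3) => ‖q - xg‖ ^ 2) p ≠ 0 := by
    simpa using hne
  have h2 := h1.sqrt hx
  have heq : (fun q : EuclideanSpace ℝ (Fin 3) => Real.sqrt (‖q - xg‖ ^ 2))
      = fun q => ‖q - xg‖ := by
    funext q; exact Real.sqrt_sq (norm_nonneg _)
  rw [heq] at h2
  refine h2.congr_fderiv ?_
  ext h
  rw [Real.sqrt_sq (norm_nonneg _)]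
  simp [real_inner_smul_left]
  ring

lemma hasFDerivAt_outer (p : EuclideanSpace ℝ (Fin 3)) (hp : p ≠ xg) :
    HasFDerivAt (fun q : EuclideanSpace ℝ (Fin 3) =>
        kv * dxmax * ‖q - xg‖ - kv ^ 2 * dxmax ^ 2 / (2 * kp))
      (innerSL ℝ ((kv * dxmax / ‖p - xg‖) • (p - xg))) p := by
  have h := ((hasFDerivAt_norm_sub (xg := xg) p hp).const_mul (kv * dxmax)).sub_const
    (kv ^ 2 * dxmax ^ 2 / (2 * kp))
  refine h.congr_fderiv ?_
  ext h'
  simp [real_inner_smul_left]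
  ring

lemma hasFDerivAt_huberU (hkp : 0 < kp) (hkv : 0 < kv) (hdxmax : 0 < dxmax)
    (p : EuclideanSpace ℝ (Fin 3)) :
    HasFDerivAt (HuberU kp kv dxmax xg)
      (innerSL ℝ (gradHuberU kp kv dxmax xg p)) p := by
  set R := kv * dxmax / kp with hR
  have hRpos : 0 < R := by positivity
  rcases lt_trichotomy ‖p - xg‖ R with hlt | heq | hgt
  · have hopen : IsOpen {q : EuclideanSpace ℝ (Fin 3) | ‖q - xg‖ < R} :=
      isOpen_lt (by fun_prop) continuous_const
    have hev : HuberU kp kv dxmax xg =ᶠ[nhds p]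
        (fun q => kp / 2 * ‖q - xg‖ ^ 2) := by
      filter_upwards [hopen.mem_nhds hlt] with q hq
      exact if_pos hq
    rw [gradHuberU, if_pos hlt]
    exact (hasFDerivAt_quad p).congr_of_eventuallyEq hev
  · have hp : p ≠ xg := by
      intro h; rw [h] at heq; simp at heq; exact absurd heq.symm (ne_of_gt hRpos)
    rw [gradHuberU, if_neg (by rw [heq]; exact lt_irrefl _)]
    have hgrad : (kv * dxmax / ‖p - xg‖) • (p - xg) = kp • (p - xg) := by
      rw [heq, hR]; congr 1; field_simp
    set g : EuclideanSpace ℝ (Fin 3) → ℝ := fun q =>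
      kv * dxmax * ‖q - xg‖ - kv ^ 2 * dxmax ^ 2 / (2 * kp) with hg
    have hgd : HasFDerivAt g (innerSL ℝ ((kv * dxmax / ‖p - xg‖) • (p - xg))) p :=
      hasFDerivAt_outer p hp
    rw [hgrad] at hgd
    have hUp : HuberU kp kv dxmax xg p = g p := by
      rw [HuberU, if_neg (by rw [heq]; exact lt_irrefl _)]
    have hkey : ∀ q : EuclideanSpace ℝ (Fin 3),
        |HuberU kp kv dxmax xg q - g q| ≤ kp / 2 * ‖q - p‖ ^ 2 := by
      intro q
      by_cases hq : ‖q - xg‖ < R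
      · rw [HuberU, if_pos hq]
        have hdiff : kp / 2 * ‖q - xg‖ ^ 2 - g q = kp / 2 * (‖q - xg‖ - R) ^ 2 := by
          rw [hg, hR]; field_simp; ring
        rw [hdiff, abs_of_nonneg (by positivity)]
        have h1 : |‖q - xg‖ - R| ≤ ‖q - p‖ := by
          rw [← heq]
          have := abs_norm_sub_norm_le (q - xg) (p - xg)
          simpa [sub_sub_sub_cancel_right] using this
        have h2 : (‖q - xg‖ - R) ^ 2 ≤ ‖q - p‖ ^ 2 := by
          rw [← sq_abs]
          exact pow_le_pow_left₀ (abs_nonneg _) h1 2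
        nlinarith
      · rw [HuberU, if_neg hq]
        simp [hg]
        positivity
    rw [hgrad, hasFDerivAt_iff_isLittleO]
    have hgo := hasFDerivAt_iff_isLittleO.mp hgd
    have hlo : (fun q : EuclideanSpace ℝ (Fin 3) => HuberU kp kv dxmax xg q - g q)
        =o[nhds p] (fun q => q - p) := by
      rw [Asymptotics.isLittleO_iff]
      intro c hc
      have hball : ∀ᶠ q in nhds p, ‖q - p‖ < 2 * c / kp := by
        exact (tendsto_norm_sub_self p).eventually_lt_const (by positivity)
      filter_upwards [hball] with q hq
      calc ‖HuberU kp kv dxmax xg q - g q‖ ≤ kp / 2 * ‖q - p‖ ^ 2 := by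
            rw [Real.norm_eq_abs]; exact hkey q
        _ ≤ kp / 2 * ((2 * c / kp) * ‖q - p‖) := by
            have := hq.le
            have h0 : (0:ℝ) ≤ ‖q - p‖ := norm_nonneg _
            have : ‖q - p‖ ^ 2 ≤ (2 * c / kp) * ‖q - p‖ := by nlinarith
            nlinarith
        _ = c * ‖q - p‖ := by field_simp
    have heqf : (fun q : EuclideanSpace ℝ (Fin 3) =>
        HuberU kp kv dxmax xg q - HuberU kp kv dxmax xg p
          - (innerSL ℝ (kp • (p - xg))) (q - p))
        = (fun q => g q - g p - (innerSL ℝ (kp • (p - xg))) (q - p))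
          + (fun q => HuberU kp kv dxmax xg q - g q) := by
      funext q; simp [hUp]; ring
    rw [heqf]
    exact hgo.add hlo
  · have hp : p ≠ xg := by
      intro h; rw [h] at hgt; simp at hgt; linarith
    have hopen : IsOpen {q : EuclideanSpace ℝ (Fin 3) | R < ‖q - xg‖} :=
      isOpen_lt continuous_const (by fun_prop)
    have hev : HuberU kp kv dxmax xg =ᶠ[nhds p]
        (fun q => kv * dxmax * ‖q - xg‖ - kv ^ 2 * dxmax ^ 2 / (2 * kp)) := by
      filter_upwards [hopen.mem_nhds hgt] with q hq
      exact if_neg (not_lt.mpr hq.le)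
    rw [gradHuberU, if_neg (not_lt.mpr hgt.le)]
    exact (hasFDerivAt_outer p hp).congr_of_eventuallyEq hev

lemma huberU_nonneg (hkp : 0 < kp) (hkv : 0 < kv) (hdxmax : 0 < dxmax)
    (p : EuclideanSpace ℝ (Fin 3)) : 0 ≤ HuberU kp kv dxmax xg p := by
  rw [HuberU]
  split_ifs with h
  · positivity
  · push_neg at h
    have h3 : kv * dxmax * (kv * dxmax / kp) ≤ kv * dxmax * ‖p - xg‖ :=
      mul_le_mul_of_nonneg_left h (by positivity)
    have h4 : kv * dxmax * (kv * dxmax / kp) = kv ^ 2 * dxmax ^ 2 / kp := by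
      field_simp
    have h5 : (0:ℝ) < kv ^ 2 * dxmax ^ 2 / kp := by positivity
    have h6 : kv ^ 2 * dxmax ^ 2 / (2 * kp) = (kv ^ 2 * dxmax ^ 2 / kp) / 2 := by ring
    linarith

lemma huberU_upper (hkp : 0 < kp) {δ : ℝ} (hδR : δ ≤ kv * dxmax / kp)
    (p : EuclideanSpace ℝ (Fin 3))
    (hp : ‖p - xg‖ < δ) : HuberU kp kv dxmax xg p ≤ kp / 2 * δ ^ 2 := by
  rw [HuberU, if_pos (lt_of_lt_of_le hp hδR)]
  have h2 : ‖p - xg‖ ^ 2 ≤ δ ^ 2 := pow_le_pow_left₀ (norm_nonneg _) hp.le 2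
  exact mul_le_mul_of_nonneg_left h2 (by positivity)

lemma huberU_lower (hkp : 0 < kp) (hkv : 0 < kv) (hdxmax : 0 < dxmax)
    {δ : ℝ} (hδ : 0 ≤ δ) (hδR : δ ≤ kv * dxmax / kp)
    (p : EuclideanSpace ℝ (Fin 3)) (hp : δ ≤ ‖p - xg‖) :
    kp / 2 * δ ^ 2 ≤ HuberU kp kv dxmax xg p := by
  rw [HuberU]
  split_ifs with h
  · exact mul_le_mul_of_nonneg_left (pow_le_pow_left₀ hδ hp 2) (by positivity)
  · push_neg at h
    have hR : 0 < kv * dxmax / kp := by positivity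
    have h1 : kp / 2 * δ ^ 2 ≤ kp / 2 * (kv * dxmax / kp) ^ 2 :=
      mul_le_mul_of_nonneg_left (pow_le_pow_left₀ hδ hδR 2) (by positivity)
    have h2 : kp / 2 * (kv * dxmax / kp) ^ 2 = kv ^ 2 * dxmax ^ 2 / (2 * kp) := by
      field_simp
    have h3 : kv * dxmax * (kv * dxmax / kp) ≤ kv * dxmax * ‖p - xg‖ :=
      mul_le_mul_of_nonneg_left h (by positivity)
    have h4 : kv * dxmax * (kv * dxmax / kp) = kv ^ 2 * dxmax ^ 2 / kp := by
      field_simp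
    have h6 : kv ^ 2 * dxmax ^ 2 / (2 * kp) = (kv ^ 2 * dxmax ^ 2 / kp) / 2 := by ring
    linarith

lemma norm_le_of_huberU_le (hkp : 0 < kp) (hkv : 0 < kv) (hdxmax : 0 < dxmax) {B : ℝ}
    (p : EuclideanSpace ℝ (Fin 3))
    (hB : HuberU kp kv dxmax xg p ≤ B) :
    ‖p - xg‖ ≤ max (kv * dxmax / kp) ((B + kv ^ 2 * dxmax ^ 2 / (2 * kp)) / (kv * dxmax)) := by
  rw [HuberU] at hB
  split_ifs at hB with h
  · exact le_max_of_le_left h.le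
  · push_neg at h
    refine le_max_of_le_right ?_
    rw [le_div_iff₀ (by positivity)]
    nlinarith

lemma norm_gradHuberU_le (hkp : 0 < kp) (hkv : 0 < kv) (hdxmax : 0 < dxmax)
    (p : EuclideanSpace ℝ (Fin 3)) :
    ‖gradHuberU kp kv dxmax xg p‖ ≤ kv * dxmax := by
  rw [gradHuberU]
  split_ifs with h
  · rw [norm_smul, Real.norm_eq_abs, abs_of_pos hkp]
    calc kp * ‖p - xg‖ ≤ kp * (kv * dxmax / kp) :=
          mul_le_mul_of_nonneg_left h.le hkp.le
      _ = kv * dxmax := by field_simp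
  · push_neg at h
    have hpos : 0 < ‖p - xg‖ := lt_of_lt_of_le (by positivity) h
    rw [norm_smul, Real.norm_eq_abs, abs_of_pos (by positivity),
      div_mul_cancel₀]
    exact hpos.ne'

lemma inner_gradHuberU (hkp : 0 < kp) (hkv : 0 < kv) (hdxmax : 0 < dxmax)
    {δ : ℝ} (hδ : 0 < δ) (p : EuclideanSpace ℝ (Fin 3))
    (hp : δ ≤ ‖p - xg‖) :
    min (kp * δ ^ 2) (kv * dxmax * δ) ≤ ⟪gradHuberU kp kv dxmax xg p, p - xg⟫ := by
  rw [gradHuberU]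
  split_ifs with h
  · rw [real_inner_smul_left, real_inner_self_eq_norm_sq]
    exact le_trans (min_le_left _ _)
      (mul_le_mul_of_nonneg_left (pow_le_pow_left₀ hδ.le hp 2) hkp.le)
  · push_neg at h
    rw [real_inner_smul_left, real_inner_self_eq_norm_sq]
    have hpos : 0 < ‖p - xg‖ := lt_of_lt_of_le hδ hp
    have heq : kv * dxmax / ‖p - xg‖ * ‖p - xg‖ ^ 2 = kv * dxmax * ‖p - xg‖ := by
      field_simp
    rw [heq]
    exact le_trans (min_le_right _ _)
      (mul_le_mul_of_nonneg_left hp (by positivity))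

end helpers

/-- Antitone from nonpositive derivative on `Ici T`. -/
lemma antitoneOn_Ici_of_hasDerivAt {f g : ℝ → ℝ} {T : ℝ}
    (hf : ∀ t ∈ Set.Ici T, HasDerivAt f (g t) t) (hg : ∀ t ∈ Set.Ici T, g t ≤ 0) :
    AntitoneOn f (Set.Ici T) := by
  refine antitoneOn_of_deriv_nonpos (convex_Ici T)
    (fun t ht => (hf t ht).continuousAt.continuousWithinAt)
    (fun t ht => (hf t (interior_subset ht)).differentiableAt.differentiableWithinAt) ?_
  intro t ht
  rw [(hf t (interior_subset ht)).deriv]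
  exact hg t (interior_subset ht)

/-- Barbalat-type lemma. -/
lemma barbalat {f f' : ℝ → ℝ} {M C : ℝ} (hMpos : 0 < M)
    (hf : ∀ t ∈ Set.Ici (0:ℝ), HasDerivAt f (f' t) t)
    (hf0 : ∀ t ∈ Set.Ici (0:ℝ), 0 ≤ f t)
    (hM : ∀ t ∈ Set.Ici (0:ℝ), |f' t| ≤ M)
    (hC : ∀ T ∈ Set.Ici (0:ℝ), (∫ t in (0:ℝ)..T, f t) ≤ C) :
    Tendsto f atTop (nhds 0) := by
  have hcont : ContinuousOn f (Set.Ici (0:ℝ)) :=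
    fun t ht => (hf t ht).continuousAt.continuousWithinAt
  have hint : ∀ p q : ℝ, 0 ≤ p → p ≤ q → IntervalIntegrable f MeasureTheory.volume p q := by
    intro p q hp hpq
    apply ContinuousOn.intervalIntegrable
    apply hcont.mono
    rw [Set.uIcc_of_le hpq]
    exact fun s hs => le_trans hp hs.1
  by_contra hcon
  rw [Metric.tendsto_atTop] at hcon
  push_neg at hcon
  obtain ⟨ε, hε, hfreq⟩ := hcon
  set d := ε / (2 * M) with hd
  have hdpos : 0 < d := by positivity
  have hbump : ∀ t, 0 ≤ t → ε ≤ f t → d * (ε / 2) ≤ ∫ s in t..(t + d), f s := by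
    intro t ht hft
    have hseg : ∀ s ∈ Set.Icc t (t + d), |f s - f t| ≤ M * (s - t) := by
      intro s hs
      have := norm_image_sub_le_of_norm_deriv_le_segment'
        (f := f) (f' := f') (a := t) (b := t + d)
        (fun u hu => (hf u (le_trans ht hu.1)).hasDerivWithinAt)
        (fun u hu => by
          rw [Real.norm_eq_abs]; exact hM u (le_trans ht hu.1)) s hs
      simpa [Real.norm_eq_abs] using this
    have hlow : ∀ s ∈ Set.Icc t (t + d), ε / 2 ≤ f s := by
      intro s hs
      have h1 := hseg s hs
      have h2 : M * (s - t) ≤ M * d := by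
        apply mul_le_mul_of_nonneg_left _ hMpos.le
        linarith [hs.2]
      have h3 : M * d = ε / 2 := by
        rw [hd]; field_simp
      have := abs_le.mp h1
      linarith [this.1]
    calc d * (ε / 2) = ∫ _ in t..(t + d), (ε / 2) := by
          rw [intervalIntegral.integral_const, smul_eq_mul]; ring
      _ ≤ ∫ s in t..(t + d), f s := by
          apply intervalIntegral.integral_mono_on (by linarith)
            intervalIntegrable_const (hint t (t + d) ht (by linarith))
          exact hlow
  have hGet : ∀ N : ℝ, ∃ t, max N 0 ≤ t ∧ ε ≤ f t := by
    intro N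
    obtain ⟨t, hts, hdist⟩ := hfreq (max N 0)
    have h0t : (0:ℝ) ≤ t := le_trans (le_max_right _ _) hts
    rw [Real.dist_eq, sub_zero, abs_of_nonneg (hf0 t h0t)] at hdist
    exact ⟨t, hts, hdist⟩
  let u : ℕ → ℝ := fun n =>
    Nat.rec (hGet 0).choose (fun _ tn => (hGet (tn + d)).choose) n
  have hu0 : ∀ n, 0 ≤ u n := by
    intro n
    cases n with
    | zero => exact le_trans (le_max_right _ _) (hGet 0).choose_spec.1
    | succ k => exact le_trans (le_max_right _ _) (hGet (u k + d)).choose_spec.1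
  have huf : ∀ n, ε ≤ f (u n) := by
    intro n
    cases n with
    | zero => exact (hGet 0).choose_spec.2
    | succ k => exact (hGet (u k + d)).choose_spec.2
  have hustep : ∀ n, u n + d ≤ u (n + 1) := fun n =>
    le_trans (le_max_left _ _) (hGet (u n + d)).choose_spec.1
  have hlb : ∀ n : ℕ, (n + 1 : ℝ) * (d * (ε / 2)) ≤ ∫ s in (0:ℝ)..(u n + d), f s := by
    intro n
    induction n with
    | zero =>
      have h1 := hint 0 (u 0) le_rfl (hu0 0)
      have h2 := hint (u 0) (u 0 + d) (hu0 0) (by linarith [hdpos])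
      rw [← intervalIntegral.integral_add_adjacent_intervals h1 h2]
      have h3 : (0:ℝ) ≤ ∫ s in (0:ℝ)..(u 0), f s :=
        intervalIntegral.integral_nonneg (hu0 0) (fun s hs => hf0 s hs.1)
      have h4 := hbump (u 0) (hu0 0) (huf 0)
      push_cast
      linarith
    | succ k ih =>
      have hk1 : (0:ℝ) ≤ u k + d := by linarith [hu0 k, hdpos]
      have h1 := hint 0 (u k + d) le_rfl hk1
      have h2 := hint (u k + d) (u (k + 1)) hk1 (hustep k)
      have h3 := hint (u (k + 1)) (u (k + 1) + d) (hu0 (k + 1)) (by linarith [hdpos])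
      rw [← intervalIntegral.integral_add_adjacent_intervals
        (h1.trans h2) h3, ← intervalIntegral.integral_add_adjacent_intervals h1 h2]
      have hmid : (0:ℝ) ≤ ∫ s in (u k + d)..(u (k + 1)), f s :=
        intervalIntegral.integral_nonneg (hustep k)
          (fun s hs => hf0 s (le_trans hk1 hs.1))
      have h4 := hbump (u (k + 1)) (hu0 (k + 1)) (huf (k + 1))
      push_cast
      push_cast at ih
      linarith
  obtain ⟨n, hn⟩ := exists_nat_gt (C / (d * (ε / 2)))
  have hpos : 0 < d * (ε / 2) := by positivity
  have hgt : C < (n + 1 : ℝ) * (d * (ε / 2)) := by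
    rw [div_lt_iff₀ hpos] at hn
    nlinarith
  have hle := hC (u n + d) (by simp only [Set.mem_Ici]; linarith [hu0 n, hdpos])
  linarith [hlb n]

set_option maxHeartbeats 1000000 in
/-- Theorem 3 of the paper: for a locally Lipschitz circular-field
state feedback `F(p, w)` perpendicular to the velocity (`F(p,w)·w = 0`) and vanishing at
zero velocity (`F(p,0) = 0`), every solution of the combined steering dynamics
`ẍ = F(x, ẋ) − ∇U(x) − kv·ẋ` converges to the goal: `x(t) → xg` and `ẋ(t) → 0`. -/
theorem goal_convergence_combined_dynamics
    (kp kv dxmax : ℝ) (hkp : 0 < kp) (hkv : 0 < kv) (hdxmax : 0 < dxmax)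
    (xg : EuclideanSpace ℝ (Fin 3))
    (F : EuclideanSpace ℝ (Fin 3) × EuclideanSpace ℝ (Fin 3) → EuclideanSpace ℝ (Fin 3))
    (hFlip : LocallyLipschitz F)
    (hFperp : ∀ p w : EuclideanSpace ℝ (Fin 3), ⟪F (p, w), w⟫ = 0)
    (hF0 : ∀ p : EuclideanSpace ℝ (Fin 3), F (p, 0) = 0)
    (x v a : ℝ → EuclideanSpace ℝ (Fin 3))
    (hx : ∀ t, 0 ≤ t → HasDerivAt x (v t) t)
    (hv : ∀ t, 0 ≤ t → HasDerivAt v (a t) t)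
    (hacc : ∀ t, 0 ≤ t →
      a t = F (x t, v t) - gradHuberU kp kv dxmax xg (x t) - kv • v t) :
    Tendsto x atTop (nhds xg) ∧ Tendsto v atTop (nhds 0) := by
  have hR : (0:ℝ) < kv * dxmax / kp := by positivity
  set U : EuclideanSpace ℝ (Fin 3) → ℝ := HuberU kp kv dxmax xg with hUdef
  set g : EuclideanSpace ℝ (Fin 3) → EuclideanSpace ℝ (Fin 3) :=
    gradHuberU kp kv dxmax xg with hgdef
  set E : ℝ → ℝ := fun t => U (x t) + (1/2 : ℝ) * ‖v t‖ ^ 2 with hEdef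
  -- energy derivative
  have hE' : ∀ t ∈ Set.Ici (0:ℝ), HasDerivAt E (-(kv * ‖v t‖ ^ 2)) t := by
    intro t ht
    have h1 : HasDerivAt (fun s => U (x s)) (⟪g (x t), v t⟫) t := by
      have hcomp := (hasFDerivAt_huberU (xg := xg) hkp hkv hdxmax
        (x t)).comp_hasDerivAt t (hx t ht)
      rw [innerSL_apply_apply] at hcomp
      exact hcomp
    have h2 : HasDerivAt (fun s => (1/2 : ℝ) * ‖v s‖ ^ 2) (⟪v t, a t⟫) t := by
      have h := ((hv t ht).norm_sq).const_mul (1/2 : ℝ)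
      refine h.congr_deriv ?_
      ring
    have h3 := h1.add h2
    refine h3.congr_deriv ?_
    have hperp : ⟪v t, F (x t, v t)⟫ = 0 := by
      rw [real_inner_comm]; exact hFperp _ _
    rw [hacc t ht, inner_sub_right, inner_sub_right, real_inner_smul_right,
      real_inner_self_eq_norm_sq, hperp, real_inner_comm (v t) (g (x t))]
    ring
  have hEanti : AntitoneOn E (Set.Ici 0) :=
    antitoneOn_Ici_of_hasDerivAt hE' (fun t ht => by
      have : (0:ℝ) ≤ kv * ‖v t‖ ^ 2 := by positivity
      linarith)
  have hUnn : ∀ p, 0 ≤ U p := huberU_nonneg hkp hkv hdxmax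
  have hEnn : ∀ t, 0 ≤ E t := fun t => add_nonneg (hUnn _) (by positivity)
  have hE0 : ∀ t ∈ Set.Ici (0:ℝ), E t ≤ E 0 :=
    fun t ht => hEanti Set.self_mem_Ici ht ht
  -- bounds
  set Mv := Real.sqrt (2 * E 0) with hMvdef
  have hMvnn : 0 ≤ Mv := Real.sqrt_nonneg _
  have hMv : ∀ t ∈ Set.Ici (0:ℝ), ‖v t‖ ≤ Mv := by
    intro t ht
    have h0 : U (x t) ≤ E t := by
      have : (0:ℝ) ≤ (1/2 : ℝ) * ‖v t‖ ^ 2 := by positivity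
      simp only [hEdef]; linarith
    have h1 : ‖v t‖ ^ 2 ≤ 2 * E 0 := by
      have h2 := hE0 t ht
      have h3 := hUnn (x t)
      simp only [hEdef] at h2 ⊢
      nlinarith
    calc ‖v t‖ = Real.sqrt (‖v t‖ ^ 2) := (Real.sqrt_sq (norm_nonneg _)).symm
      _ ≤ Mv := Real.sqrt_le_sqrt h1
  set Mx := max (kv * dxmax / kp) ((E 0 + kv ^ 2 * dxmax ^ 2 / (2 * kp)) / (kv * dxmax))
    with hMxdef
  have hMxnn : 0 ≤ Mx := le_trans hR.le (le_max_left _ _)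
  have hMx : ∀ t ∈ Set.Ici (0:ℝ), ‖x t - xg‖ ≤ Mx := by
    intro t ht
    have hXb : U (x t) ≤ E 0 := by
      have hle : U (x t) ≤ E t := by
        have : (0:ℝ) ≤ (1/2 : ℝ) * ‖v t‖ ^ 2 := by positivity
        simp only [hEdef]
        linarith
      exact le_trans hle (hE0 t ht)
    exact norm_le_of_huberU_le hkp hkv hdxmax _ hXb
  -- compactness and boundedness of F
  set K := (Metric.closedBall xg Mx) ×ˢ
    (Metric.closedBall (0 : EuclideanSpace ℝ (Fin 3)) Mv) with hKdef
  have hKcomp : IsCompact K :=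
    (isCompact_closedBall _ _).prod (isCompact_closedBall _ _)
  have hFcont : Continuous F := hFlip.continuous
  obtain ⟨MF, hMF⟩ := hKcomp.exists_bound_of_continuousOn hFcont.continuousOn
  have hmemK : ∀ t ∈ Set.Ici (0:ℝ), (x t, v t) ∈ K := by
    intro t ht
    refine Set.mem_prod.mpr ⟨?_, ?_⟩
    · rw [Metric.mem_closedBall, dist_eq_norm]; exact hMx t ht
    · rw [Metric.mem_closedBall, dist_eq_norm, sub_zero]; exact hMv t ht
  -- bound on acceleration
  set Ma := MF + kv * dxmax + kv * Mv with hMadef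
  have hMa : ∀ t ∈ Set.Ici (0:ℝ), ‖a t‖ ≤ Ma := by
    intro t ht
    rw [hacc t ht]
    calc ‖F (x t, v t) - g (x t) - kv • v t‖
        ≤ ‖F (x t, v t) - g (x t)‖ + ‖kv • v t‖ := norm_sub_le _ _
      _ ≤ (‖F (x t, v t)‖ + ‖g (x t)‖) + ‖kv • v t‖ := by
          have := norm_sub_le (F (x t, v t)) (g (x t)); linarith
      _ ≤ Ma := by
          have h1 := hMF _ (hmemK t ht)
          have h2 := norm_gradHuberU_le hkp hkv hdxmax (xg := xg) (x t)
          have h3 : ‖kv • v t‖ ≤ kv * Mv := by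
            rw [norm_smul, Real.norm_eq_abs, abs_of_pos hkv]
            exact mul_le_mul_of_nonneg_left (hMv t ht) hkv.le
          simp only [hMadef]
          linarith
  have hMann : 0 ≤ Ma := le_trans (norm_nonneg _) (hMa 0 Set.self_mem_Ici)
  -- continuity of v on [0,∞)
  have hvcont : ContinuousOn v (Set.Ici (0:ℝ)) :=
    fun t ht => (hv t ht).continuousAt.continuousWithinAt
  -- integral bound ∫ ‖v‖² ≤ E 0 / kv
  have hIb : ∀ T ∈ Set.Ici (0:ℝ), (∫ t in (0:ℝ)..T, ‖v t‖ ^ 2) ≤ E 0 / kv := by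
    intro T hT
    have hderiv : ∀ t ∈ Set.uIcc (0:ℝ) T, HasDerivAt E (-(kv * ‖v t‖ ^ 2)) t := by
      intro t ht
      rw [Set.uIcc_of_le hT] at ht
      exact hE' t ht.1
    have hcont2 : ContinuousOn (fun t => -(kv * ‖v t‖ ^ 2)) (Set.uIcc (0:ℝ) T) := by
      rw [Set.uIcc_of_le hT]
      exact (((hvcont.mono (fun s hs => hs.1)).norm.pow 2).const_smul kv).neg
    have hinteg : IntervalIntegrable (fun t => -(kv * ‖v t‖ ^ 2))
        MeasureTheory.volume 0 T := hcont2.intervalIntegrable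
    have hFTC := intervalIntegral.integral_eq_sub_of_hasDerivAt hderiv hinteg
    have h2 : ∫ t in (0:ℝ)..T, -(kv * ‖v t‖ ^ 2)
        = -(kv * ∫ t in (0:ℝ)..T, ‖v t‖ ^ 2) := by
      rw [intervalIntegral.integral_neg, intervalIntegral.integral_const_mul]
    rw [h2] at hFTC
    have h3 : kv * ∫ t in (0:ℝ)..T, ‖v t‖ ^ 2 = E 0 - E T := by linarith
    have h4 := hEnn T
    rw [div_eq_mul_inv, mul_comm (E 0), ← div_eq_inv_mul]
    rw [le_div_iff₀ hkv]
    calc (∫ t in (0:ℝ)..T, ‖v t‖ ^ 2) * kv = kv * ∫ t in (0:ℝ)..T, ‖v t‖ ^ 2 := by ring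
      _ = E 0 - E T := h3
      _ ≤ E 0 := by linarith
  -- Barbalat gives ‖v‖² → 0
  have hf'd : ∀ t ∈ Set.Ici (0:ℝ),
      HasDerivAt (fun s => ‖v s‖ ^ 2) (2 * ⟪v t, a t⟫) t :=
    fun t ht => (hv t ht).norm_sq
  have hfM : ∀ t ∈ Set.Ici (0:ℝ), |2 * ⟪v t, a t⟫| ≤ 2 * Mv * Ma + 1 := by
    intro t ht
    have h1 := abs_real_inner_le_norm (v t) (a t)
    have h2 : ‖v t‖ * ‖a t‖ ≤ Mv * Ma :=
      mul_le_mul (hMv t ht) (hMa t ht) (norm_nonneg _) hMvnn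
    rw [abs_mul]
    have : |(2:ℝ)| = 2 := by norm_num
    rw [this]
    nlinarith [abs_nonneg ⟪v t, a t⟫]
  have hvsq0 : Tendsto (fun t => ‖v t‖ ^ 2) atTop (nhds 0) := by
    refine barbalat (M := 2 * Mv * Ma + 1) (C := E 0 / kv) (by positivity)
      hf'd (fun t _ => by positivity) hfM hIb
  have hv0 : Tendsto v atTop (nhds 0) := by
    rw [tendsto_zero_iff_norm_tendsto_zero]
    have h1 : Tendsto (fun t => Real.sqrt (‖v t‖ ^ 2)) atTop (nhds (Real.sqrt 0)) :=
      (Real.continuous_sqrt.tendsto 0).comp hvsq0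
    simpa [Real.sqrt_sq] using h1
  -- limit of energy
  set E2 : ℝ → ℝ := fun t => E (max t 0) with hE2def
  have hE2anti : Antitone E2 := by
    intro s t hst
    exact hEanti (le_max_right s 0) (le_max_right t 0) (max_le_max hst le_rfl)
  have hbdd : BddBelow (Set.range E2) := by
    refine ⟨0, ?_⟩
    rintro y ⟨t, rfl⟩
    exact hEnn _
  have hE2lim := tendsto_atTop_ciInf hE2anti hbdd
  set L := ⨅ t, E2 t with hLdef
  have hEtend : Tendsto E atTop (nhds L) := by
    refine hE2lim.congr' ?_
    filter_upwards [eventually_ge_atTop (0:ℝ)] with t ht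
    simp only [hE2def, max_eq_left ht]
  have hLnn : 0 ≤ L := le_ciInf fun t => hEnn _
  -- U (x t) → L
  have hUto : Tendsto (fun t => U (x t)) atTop (nhds L) := by
    have h2 : Tendsto (fun t => (1/2 : ℝ) * ‖v t‖ ^ 2) atTop (nhds 0) := by
      have := hvsq0.const_mul (1/2 : ℝ)
      simpa using this
    have h3 := hEtend.sub h2
    simp only [sub_zero] at h3
    refine h3.congr ?_
    intro t
    simp only [hEdef]
    ring
  -- F (x t, v t) → 0
  have hFto : Tendsto (fun t => F (x t, v t)) atTop (nhds 0) := by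
    have hUC := hKcomp.uniformContinuousOn_of_continuous hFcont.continuousOn
    rw [Metric.uniformContinuousOn_iff] at hUC
    rw [Metric.tendsto_atTop]
    intro ε hε
    obtain ⟨δ, hδ, hUCd⟩ := hUC ε hε
    have hvn : Tendsto (fun t => ‖v t‖) atTop (nhds 0) :=
      tendsto_zero_iff_norm_tendsto_zero.mp hv0
    have hev := hvn.eventually_lt_const hδ
    rw [eventually_atTop] at hev
    obtain ⟨N, hN⟩ := hev
    refine ⟨max N 0, fun t ht => ?_⟩
    have htN : N ≤ t := le_trans (le_max_left _ _) ht
    have ht0 : (0:ℝ) ≤ t := le_trans (le_max_right _ _) ht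
    have hm1 : (x t, v t) ∈ K := hmemK t ht0
    have hm2 : ((x t, (0 : EuclideanSpace ℝ (Fin 3))) : _ × _) ∈ K := by
      refine Set.mem_prod.mpr ⟨?_, ?_⟩
      · rw [Metric.mem_closedBall, dist_eq_norm]; exact hMx t ht0
      · rw [Metric.mem_closedBall, dist_self]; exact hMvnn
    have hdist : dist ((x t, v t) : _ × _) (x t, (0 : EuclideanSpace ℝ (Fin 3))) < δ := by
      rw [Prod.dist_eq]
      simp only [dist_self, dist_zero_right]
      rw [max_eq_right (norm_nonneg _)]
      exact hN t htN
    have := hUCd _ hm1 _ hm2 hdist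
    rw [hF0 (x t)] at this
    simpa [dist_eq_norm] using this
  -- L = 0
  have hL0 : L = 0 := by
    by_contra hL
    have hLpos : 0 < L := lt_of_le_of_ne hLnn (Ne.symm hL)
    set δ := min (kv * dxmax / kp) (Real.sqrt (L / (2 * kp))) with hδdef
    have hδpos : 0 < δ := lt_min hR (Real.sqrt_pos.mpr (by positivity))
    have hδR : δ ≤ kv * dxmax / kp := min_le_left _ _
    have hδsq : kp / 2 * δ ^ 2 ≤ L / 4 := by
      have h1 : δ ^ 2 ≤ L / (2 * kp) := by
        have h2 : δ ≤ Real.sqrt (L / (2 * kp)) := min_le_right _ _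
        have h3 : δ ^ 2 ≤ Real.sqrt (L / (2 * kp)) ^ 2 :=
          pow_le_pow_left₀ hδpos.le h2 2
        rwa [Real.sq_sqrt (by positivity)] at h3
      have h4 : kp / 2 * δ ^ 2 ≤ kp / 2 * (L / (2 * kp)) :=
        mul_le_mul_of_nonneg_left h1 (by positivity)
      have h5 : kp / 2 * (L / (2 * kp)) = L / 4 := by field_simp; ring
      linarith
    set c0 := min (kp * δ ^ 2) (kv * dxmax * δ) with hc0def
    have hc0pos : 0 < c0 := lt_min (by positivity) (by positivity)
    -- eventual facts
    have hev1 : ∀ᶠ t in atTop, L / 2 < U (x t) :=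
      hUto.eventually_const_lt (by linarith)
    have hev2 : ∀ᶠ t in atTop, ‖v t‖ ^ 2 < c0 / 8 :=
      hvsq0.eventually_lt_const (by positivity)
    have hev3 : ∀ᶠ t in atTop, ‖F (x t, v t)‖ < c0 / (8 * (Mx + 1)) := by
      have := tendsto_zero_iff_norm_tendsto_zero.mp hFto
      exact this.eventually_lt_const (by positivity)
    have hev4 : ∀ᶠ t in atTop, ‖v t‖ < c0 / (8 * kv * (Mx + 1)) := by
      have := tendsto_zero_iff_norm_tendsto_zero.mp hv0
      exact this.eventually_lt_const (by positivity)
    have hev5 : ∀ᶠ t in atTop, (0:ℝ) ≤ t := eventually_ge_atTop 0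
    have hall := (hev1.and (hev2.and (hev3.and (hev4.and hev5))))
    rw [eventually_atTop] at hall
    obtain ⟨T, hT⟩ := hall
    set T' := max T 0 with hT'def
    have hT'0 : (0:ℝ) ≤ T' := le_max_right _ _
    have hTfacts : ∀ t, T' ≤ t →
        L / 2 < U (x t) ∧ ‖v t‖ ^ 2 < c0 / 8 ∧
        ‖F (x t, v t)‖ < c0 / (8 * (Mx + 1)) ∧
        ‖v t‖ < c0 / (8 * kv * (Mx + 1)) ∧ (0:ℝ) ≤ t := by
      intro t ht
      exact hT t (le_trans (le_max_left _ _) ht)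
    -- W and its derivative
    set W : ℝ → ℝ := fun t => ⟪v t, x t - xg⟫ with hWdef
    have hW' : ∀ t ∈ Set.Ici (0:ℝ),
        HasDerivAt W (⟪v t, v t⟫ + ⟪a t, x t - xg⟫) t := by
      intro t ht
      exact (hv t ht).inner ℝ ((hx t ht).sub_const xg)
    have hWbound : ∀ t ∈ Set.Ici (0:ℝ), |W t| ≤ Mv * Mx := by
      intro t ht
      calc |W t| ≤ ‖v t‖ * ‖x t - xg‖ := abs_real_inner_le_norm _ _
        _ ≤ Mv * Mx := mul_le_mul (hMv t ht) (hMx t ht) (norm_nonneg _) hMvnn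
    -- derivative bound on [T', ∞)
    have hderivb : ∀ t ∈ Set.Ici T',
        ⟪v t, v t⟫ + ⟪a t, x t - xg⟫ + c0 / 2 ≤ 0 := by
      intro t ht
      obtain ⟨hU2, hv2, hF2, hv3, ht0⟩ := hTfacts t ht
      -- distance lower bound
      have hdl : δ ≤ ‖x t - xg‖ := by
        by_contra hcon
        push_neg at hcon
        have := huberU_upper hkp hδR (xg := xg) (x t) hcon
        have : U (x t) ≤ L / 4 := le_trans this hδsq
        linarith
      have hginner := inner_gradHuberU hkp hkv hdxmax hδpos (xg := xg) (x t) hdl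
      have hgc0 : c0 ≤ ⟪g (x t), x t - xg⟫ := hginner
      have haeq : ⟪a t, x t - xg⟫
          = ⟪F (x t, v t), x t - xg⟫ - ⟪g (x t), x t - xg⟫
            - kv * ⟪v t, x t - xg⟫ := by
        rw [hacc t ht0]
        rw [inner_sub_left, inner_sub_left, real_inner_smul_left]
      have hFin : |⟪F (x t, v t), x t - xg⟫| ≤ c0 / 8 := by
        calc |⟪F (x t, v t), x t - xg⟫| ≤ ‖F (x t, v t)‖ * ‖x t - xg‖ :=
              abs_real_inner_le_norm _ _
          _ ≤ (c0 / (8 * (Mx + 1))) * (Mx + 1) := by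
              apply mul_le_mul hF2.le (by linarith [hMx t ht0]) (norm_nonneg _)
              positivity
          _ = c0 / 8 := by field_simp
      have hvin : |kv * ⟪v t, x t - xg⟫| ≤ c0 / 8 := by
        rw [abs_mul, abs_of_pos hkv]
        calc kv * |⟪v t, x t - xg⟫| ≤ kv * (‖v t‖ * ‖x t - xg‖) :=
              mul_le_mul_of_nonneg_left (abs_real_inner_le_norm _ _) hkv.le
          _ ≤ kv * ((c0 / (8 * kv * (Mx + 1))) * (Mx + 1)) := by
              apply mul_le_mul_of_nonneg_left _ hkv.le
              apply mul_le_mul hv3.le (by linarith [hMx t ht0]) (norm_nonneg _)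
              positivity
          _ = c0 / 8 := by field_simp
      have hvv : ⟪v t, v t⟫ < c0 / 8 := by
        rw [real_inner_self_eq_norm_sq]; exact hv2
      have h1 := abs_le.mp hFin
      have h2 := abs_le.mp hvin
      have h8 : c0 / 8 + c0 / 8 + c0 / 8 + c0 / 2 ≤ c0 := by linarith
      linarith [h1.2, h2.1]
    -- the function  W + (c0/2)·t  is antitone on [T', ∞)
    have hanti : AntitoneOn (fun t => W t + (c0 / 2) * t) (Set.Ici T') := by
      apply antitoneOn_Ici_of_hasDerivAt
        (g := fun t => ⟪v t, v t⟫ + ⟪a t, x t - xg⟫ + c0 / 2)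
      · intro t ht
        have h1 := hW' t (le_trans hT'0 ht)
        have h2 : HasDerivAt (fun s : ℝ => (c0 / 2) * s) (c0 / 2) t := by
          simpa using (hasDerivAt_id t).const_mul (c0 / 2)
        exact h1.add h2
      · exact hderivb
    -- contradiction
    set s := T' + (2 / c0) * (W T' + Mv * Mx + 1) with hsdef
    have hWT' := hWbound T' (Set.mem_Ici.mpr hT'0)
    have hWTlow := abs_le.mp hWT'
    have hincr : 0 < (2 / c0) * (W T' + Mv * Mx + 1) := by
      apply mul_pos (by positivity)
      linarith [hWTlow.1]
    have hsT : T' ≤ s := by simp only [hsdef]; linarith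
    have h1 := hanti (Set.mem_Ici.mpr le_rfl) (Set.mem_Ici.mpr hsT) hsT
    have h2 : W s + (c0 / 2) * s ≤ W T' + (c0 / 2) * T' := h1
    have h3 : (c0 / 2) * (s - T') = W T' + Mv * Mx + 1 := by
      simp only [hsdef]
      field_simp
      ring
    have h4 : W s ≤ - (Mv * Mx) - 1 := by nlinarith
    have h5 := hWbound s (Set.mem_Ici.mpr (le_trans hT'0 hsT))
    have h6 := abs_le.mp h5
    linarith [h6.1]
  -- x → xg
  have hUto0 : Tendsto (fun t => U (x t)) atTop (nhds 0) := by
    rw [← hL0]; exact hUto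
  have hxto : Tendsto x atTop (nhds xg) := by
    rw [Metric.tendsto_atTop]
    intro ε hε
    set δ := min ε (kv * dxmax / kp) with hδdef
    have hδpos : 0 < δ := lt_min hε hR
    have hδR : δ ≤ kv * dxmax / kp := min_le_right _ _
    have hev := hUto0.eventually_lt_const (show (0:ℝ) < kp / 2 * δ ^ 2 by positivity)
    rw [eventually_atTop] at hev
    obtain ⟨N, hN⟩ := hev
    refine ⟨N, fun t ht => ?_⟩
    have h1 := hN t ht
    rw [dist_eq_norm]
    by_contra hcon
    push_neg at hcon
    have h2 : δ ≤ ‖x t - xg‖ := le_trans (min_le_left _ _) hcon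
    have h3 := huberU_lower hkp hkv hdxmax hδpos.le hδR (xg := xg) (x t) h2
    linarith
  exact ⟨hxto, hv0⟩
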